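/- arXiv:1605.00836 — 2 statements merged into one kernel-verified Lean document; each statement's English description precedes it below -/
import Mathlib

section
/- Let $H \in C^1(\mathbb{R})$ be convex, $k \in W^{1,1}([0,T])$ be nonnegative and nonincreasing, and $u$ be sufficiently smooth on $(0,T)$. Then for a.e. $t \in (0,T)$: $H'(u(t))\frac{d}{dt}(k*u)(t) = \frac{d}{dt}(k*H(u))(t) + (H'(u(t))u(t) - H(u(t)))k(t) + \int_0^t (H(u(t-s)) - H(u(t)) - H'(u(t))[u(t-s)-u(t)])(-k'(s))\,ds$. -/
open MeasureTheory Set Topology Filter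

noncomputable section

/-- Laplace convolution on `[0,t]`: `(k*u)(t) = ∫_0^t k(t-s) u(s) ds`. -/
def tconv (k u : ℝ → ℝ) (t : ℝ) : ℝ := ∫ s in Set.Ioc 0 t, k (t - s) * u s

/-- Integrable times bounded continuous is integrable on `Ioc`. -/
lemma integrableOn_Ioc_mul_bdd {g w : ℝ → ℝ} {a b : ℝ} (hg : IntegrableOn g (Ioc a b))
    (hw : Continuous w) : IntegrableOn (fun x => g x * w x) (Ioc a b) := by
  obtain ⟨C, hC⟩ := isCompact_Icc.exists_bound_of_continuousOn
    (hw.continuousOn (s := Icc a b))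
  refine (hg.bdd_mul (c := C) hw.aestronglyMeasurable ?_).congr
    (ae_of_all _ fun x => mul_comm _ _)
  exact (ae_restrict_mem measurableSet_Ioc).mono fun x hx => hC x (Ioc_subset_Icc_self hx)

/-- Auxiliary: FTC-based rewriting of the `k'`-integral. -/
theorem keyB (T : ℝ) (k k' v : ℝ → ℝ)
    (hkint : IntegrableOn k (Ioc 0 T))
    (hkderiv : ∀ t ∈ Ioo 0 T, HasDerivAt k (k' t) t)
    (hk'int : IntegrableOn k' (Ioc 0 T))
    (hv : ContDiff ℝ 1 v) {t₀ : ℝ} (ht₀ : t₀ ∈ Ioo 0 T) :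
    ∫ s in Ioc 0 t₀, k' s * (v (t₀ - s) - v t₀)
      = k t₀ * (v 0 - v t₀) + ∫ s in (0:ℝ)..t₀, k s * deriv v (t₀ - s) := by
  obtain ⟨ht₀0, ht₀T⟩ := ht₀
  have hvd : ∀ x, HasDerivAt v (deriv v x) x := fun x =>
    ((hv.differentiable one_ne_zero) x).hasDerivAt
  have hdvc : Continuous (deriv v) := hv.continuous_deriv le_rfl
  have hk'i : IntegrableOn k' (Ioc 0 t₀) := hk'int.mono_set (Ioc_subset_Ioc_right ht₀T.le)
  have hki : IntegrableOn k (Ioc 0 t₀) := hkint.mono_set (Ioc_subset_Ioc_right ht₀T.le)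
  haveI : IsFiniteMeasure (volume.restrict (Ioc (0:ℝ) t₀)) :=
    ⟨by rw [Measure.restrict_apply_univ]; exact measure_Ioc_lt_top⟩
  obtain ⟨C, hC⟩ := isCompact_Icc.exists_bound_of_continuousOn
    (hdvc.continuousOn (s := Icc (0:ℝ) t₀))
  have hC0 : 0 ≤ C := le_trans (norm_nonneg _) (hC 0 ⟨le_rfl, ht₀0.le⟩)
  set Dv := deriv v with hDv
  -- Step 1: rewrite the integrand using FTC for `v`.
  have step1 : ∀ s ∈ Ioc 0 t₀, k' s * (v (t₀ - s) - v t₀)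
      = -∫ r in Ioc 0 t₀, k' s * (Ioc (t₀ - s) t₀).indicator Dv r := by
    intro s hs
    have hsub : v t₀ - v (t₀ - s) = ∫ r in (t₀ - s)..t₀, Dv r := by
      refine (intervalIntegral.integral_eq_sub_of_hasDerivAt (fun x _ => hvd x)
        (hdvc.intervalIntegrable _ _)).symm
    have h1 : (∫ r in (t₀ - s)..t₀, Dv r) = ∫ r in Ioc (t₀ - s) t₀, Dv r :=
      intervalIntegral.integral_of_le (by linarith [hs.1])
    have h2 : (∫ r in Ioc 0 t₀, (Ioc (t₀ - s) t₀).indicator Dv r)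
        = ∫ r in Ioc (t₀ - s) t₀, Dv r := by
      rw [setIntegral_indicator measurableSet_Ioc,
        inter_eq_self_of_subset_right (Ioc_subset_Ioc_left (by linarith [hs.2]))]
    rw [integral_const_mul, h2, ← h1, ← hsub]
    ring
  have hLHS : (∫ s in Ioc 0 t₀, k' s * (v (t₀ - s) - v t₀))
      = -∫ s in Ioc 0 t₀, ∫ r in Ioc 0 t₀, k' s * (Ioc (t₀ - s) t₀).indicator Dv r := by
    rw [← integral_neg]
    refine setIntegral_congr_fun measurableSet_Ioc fun s hs => ?_
    exact step1 s hs
  -- Step 2: Fubini.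
  have hprodint : Integrable (Function.uncurry fun s r =>
      k' s * (Ioc (t₀ - s) t₀).indicator Dv r)
      ((volume.restrict (Ioc 0 t₀)).prod (volume.restrict (Ioc 0 t₀))) := by
    have hae2 : ∀ᵐ p : ℝ × ℝ ∂((volume.restrict (Ioc 0 t₀)).prod
        (volume.restrict (Ioc 0 t₀))), p.2 ∈ Ioc 0 t₀ := by
      rw [ae_iff]
      have hset : {p : ℝ × ℝ | ¬ p.2 ∈ Ioc 0 t₀} = (univ : Set ℝ) ×ˢ (Ioc 0 t₀)ᶜ := by
        ext p; simp
      rw [hset, Measure.prod_prod, Measure.restrict_apply (measurableSet_Ioc.compl)]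
      simp
    have hmeas : AEStronglyMeasurable (Function.uncurry fun s r =>
        k' s * (Ioc (t₀ - s) t₀).indicator Dv r)
        ((volume.restrict (Ioc 0 t₀)).prod (volume.restrict (Ioc 0 t₀))) := by
      have h1 : AEStronglyMeasurable (fun p : ℝ × ℝ => k' p.1)
          ((volume.restrict (Ioc 0 t₀)).prod (volume.restrict (Ioc 0 t₀))) :=
        hk'i.1.comp_fst
      have h2 : StronglyMeasurable
          (fun p : ℝ × ℝ => (Ioc (t₀ - p.1) t₀).indicator Dv p.2) := by
        have heq : (fun p : ℝ × ℝ => (Ioc (t₀ - p.1) t₀).indicator Dv p.2)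
            = ({p : ℝ × ℝ | t₀ - p.1 < p.2} ∩ {p : ℝ × ℝ | p.2 ≤ t₀}).indicator
              (fun p => Dv p.2) := by
          ext p
          by_cases h : p.2 ∈ Ioc (t₀ - p.1) t₀
          · rw [indicator_of_mem h, indicator_of_mem (by exact ⟨h.1, h.2⟩)]
          · rw [indicator_of_notMem h, indicator_of_notMem (by
              intro hmem; exact h ⟨hmem.1, hmem.2⟩)]
        rw [heq]
        refine StronglyMeasurable.indicator ?_ ?_
        · exact (hdvc.comp continuous_snd).stronglyMeasurable
        · exact (measurableSet_lt (measurable_const.sub measurable_fst) measurable_snd).inter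
            (measurableSet_le measurable_snd measurable_const)
      exact h1.mul h2.aestronglyMeasurable
    refine Integrable.mono' (hk'i.norm.mul_prod (integrable_const C)) hmeas ?_
    filter_upwards [hae2] with p hp
    have hb : ‖(Ioc (t₀ - p.1) t₀).indicator Dv p.2‖ ≤ C := by
      by_cases h : p.2 ∈ Ioc (t₀ - p.1) t₀
      · rw [indicator_of_mem h]
        exact hC _ ⟨hp.1.le, hp.2⟩
      · rw [indicator_of_notMem h]; simpa using hC0
    calc ‖Function.uncurry (fun s r => k' s * (Ioc (t₀ - s) t₀).indicator Dv r) p‖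
        = ‖k' p.1‖ * ‖(Ioc (t₀ - p.1) t₀).indicator Dv p.2‖ := by
          simp [Function.uncurry, norm_mul]
      _ ≤ ‖k' p.1‖ * C := mul_le_mul_of_nonneg_left hb (norm_nonneg _)
  have hswap : (∫ s in Ioc 0 t₀, ∫ r in Ioc 0 t₀, k' s * (Ioc (t₀ - s) t₀).indicator Dv r)
      = ∫ r in Ioc 0 t₀, ∫ s in Ioc 0 t₀, k' s * (Ioc (t₀ - s) t₀).indicator Dv r :=
    integral_integral_swap hprodint
  -- Step 3: compute the inner integral for a.e. `r`.
  have hae_r : ∀ᵐ r ∂(volume.restrict (Ioc 0 t₀)), r ∈ Ioo 0 t₀ := by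
    have hne : ∀ᵐ r : ℝ ∂volume, r ≠ t₀ := by
      rw [ae_iff]
      have : {r : ℝ | ¬ r ≠ t₀} = {t₀} := by ext r; simp
      rw [this]; exact measure_singleton t₀
    filter_upwards [ae_restrict_mem measurableSet_Ioc, ae_restrict_of_ae hne] with r hr hr'
    exact ⟨hr.1, lt_of_le_of_ne hr.2 hr'⟩
  have hinner : (∫ r in Ioc 0 t₀, ∫ s in Ioc 0 t₀, k' s * (Ioc (t₀ - s) t₀).indicator Dv r)
      = ∫ r in Ioc 0 t₀, Dv r * (k t₀ - k (t₀ - r)) := by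
    refine integral_congr_ae ?_
    filter_upwards [hae_r] with r hr
    have hr0 : 0 < r := hr.1
    have hrt : r < t₀ := hr.2
    have e1 : (∫ s in Ioc 0 t₀, k' s * (Ioc (t₀ - s) t₀).indicator Dv r)
        = ∫ s in Ioc 0 t₀, Dv r * (Ioi (t₀ - r)).indicator k' s := by
      refine setIntegral_congr_fun measurableSet_Ioc fun s hs => ?_
      by_cases h : t₀ - r < s
      · rw [indicator_of_mem (by exact ⟨by linarith, hrt.le⟩),
          indicator_of_mem (by exact h)]
        ring
      · rw [indicator_of_notMem (by
          intro hmem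
          exact h (by linarith [hmem.1])), indicator_of_notMem (by exact h)]
        ring
    have e2 : (∫ s in Ioc 0 t₀, (Ioi (t₀ - r)).indicator k' s)
        = ∫ s in Ioc (t₀ - r) t₀, k' s := by
      have hseteq : Ioc 0 t₀ ∩ Ioi (t₀ - r) = Ioc (t₀ - r) t₀ := by
        ext x
        simp only [mem_inter_iff, mem_Ioc, mem_Ioi]
        constructor
        · rintro ⟨⟨h1, h2⟩, h3⟩; exact ⟨h3, h2⟩
        · rintro ⟨h1, h2⟩; exact ⟨⟨by linarith, h2⟩, h1⟩
      rw [setIntegral_indicator measurableSet_Ioi, hseteq]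
    have e3 : (∫ s in Ioc (t₀ - r) t₀, k' s) = k t₀ - k (t₀ - r) := by
      rw [← intervalIntegral.integral_of_le (by linarith)]
      refine intervalIntegral.integral_eq_sub_of_hasDerivAt ?_ ?_
      · intro x hx
        rw [uIcc_of_le (by linarith)] at hx
        exact hkderiv x ⟨by linarith [hx.1], by linarith [hx.2]⟩
      · rw [intervalIntegrable_iff_integrableOn_Ioc_of_le (by linarith)]
        exact hk'int.mono_set (Ioc_subset_Ioc (by linarith) ht₀T.le)
    rw [e1, integral_const_mul, e2, e3]
  -- Step 4: split and compute.
  have i1 : IntegrableOn (fun r => Dv r * k t₀) (Ioc 0 t₀) :=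
    (hdvc.mul continuous_const).integrableOn_Ioc
  have i2 : IntegrableOn (fun r => Dv r * k (t₀ - r)) (Ioc 0 t₀) := by
    have hkII : IntervalIntegrable k volume 0 t₀ :=
      (intervalIntegrable_iff_integrableOn_Ioc_of_le ht₀0.le).2 hki
    have h2 := (hkII.comp_sub_left t₀).symm
    rw [sub_self, sub_zero] at h2
    have hki2 : IntegrableOn (fun r => k (t₀ - r)) (Ioc 0 t₀) :=
      (intervalIntegrable_iff_integrableOn_Ioc_of_le ht₀0.le).1 h2
    refine hki2.bdd_mul (c := C) hdvc.aestronglyMeasurable ?_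
    filter_upwards [ae_restrict_mem measurableSet_Ioc] with r hr
    exact hC r ⟨hr.1.le, hr.2⟩
  have hsplit : (∫ r in Ioc 0 t₀, Dv r * (k t₀ - k (t₀ - r)))
      = (∫ r in Ioc 0 t₀, Dv r * k t₀) - ∫ r in Ioc 0 t₀, Dv r * k (t₀ - r) := by
    rw [← integral_sub i1 i2]
    exact integral_congr_ae (ae_of_all _ fun r => by ring)
  have hft : (∫ r in Ioc 0 t₀, Dv r * k t₀) = k t₀ * (v t₀ - v 0) := by
    rw [integral_mul_const]
    have hv0 : (∫ r in Ioc 0 t₀, Dv r) = v t₀ - v 0 := by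
      rw [← intervalIntegral.integral_of_le ht₀0.le]
      exact intervalIntegral.integral_eq_sub_of_hasDerivAt (fun x _ => hvd x)
        (hdvc.intervalIntegrable _ _)
    rw [hv0]; ring
  have hlast : (∫ r in Ioc 0 t₀, Dv r * k (t₀ - r)) = ∫ s in (0:ℝ)..t₀, k s * Dv (t₀ - s) := by
    rw [← intervalIntegral.integral_of_le ht₀0.le]
    rw [intervalIntegral.integral_congr (g := fun r => (fun x => k x * Dv (t₀ - x)) (t₀ - r))
      (fun r _ => by simp [sub_sub_cancel, mul_comm])]
    rw [intervalIntegral.integral_comp_sub_left (fun x => k x * Dv (t₀ - x)) t₀]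
    simp
  rw [hLHS, hswap, hinner, hsplit, hft, hlast]
  ring

/-- Auxiliary: differentiability of the convolution. -/
theorem keyA (T : ℝ) (k k' v : ℝ → ℝ)
    (hknn : ∀ t ∈ Ioc 0 T, 0 ≤ k t) (hkmono : AntitoneOn k (Ioc 0 T))
    (hkint : IntegrableOn k (Ioc 0 T))
    (hkderiv : ∀ t ∈ Ioo 0 T, HasDerivAt k (k' t) t)
    (hv : ContDiff ℝ 1 v) {t₀ : ℝ} (ht₀ : t₀ ∈ Ioo 0 T) :
    HasDerivAt (tconv k v)
      (k t₀ * v 0 + ∫ s in (0:ℝ)..t₀, k s * deriv v (t₀ - s)) t₀ := by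
  obtain ⟨ht₀0, ht₀T⟩ := ht₀
  have hvc : Continuous v := hv.continuous
  have hvd : ∀ x, HasDerivAt v (deriv v x) x := fun x =>
    ((hv.differentiable one_ne_zero) x).hasDerivAt
  have hdvc : Continuous (deriv v) := hv.continuous_deriv le_rfl
  set Dv := deriv v with hDv
  have hT : 0 < T := lt_trans ht₀0 ht₀T
  set δ : ℝ := min t₀ (T - t₀) / 2 with hδdef
  have hδ : 0 < δ := by
    have : 0 < min t₀ (T - t₀) := lt_min ht₀0 (by linarith)
    positivity
  have hδ1 : δ < t₀ := by
    have h1 : min t₀ (T - t₀) ≤ t₀ := min_le_left _ _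
    simp only [hδdef]; linarith
  have hδ2 : t₀ + δ < T := by
    have h1 : min t₀ (T - t₀) ≤ T - t₀ := min_le_right _ _
    simp only [hδdef]; linarith
  -- bound on `Dv` on `Icc (-T) T`
  obtain ⟨C, hC⟩ := isCompact_Icc.exists_bound_of_continuousOn
    (hdvc.continuousOn (s := Icc (-T) T))
  have hC0 : 0 ≤ C := le_trans (norm_nonneg _) (hC 0 ⟨by linarith, hT.le⟩)
  -- interval integrability of `fun s => k s * v (t - s)`
  have hIb : ∀ t a b : ℝ, 0 ≤ a → 0 ≤ b → a ≤ T → b ≤ T →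
      IntervalIntegrable (fun s => k s * v (t - s)) volume a b := by
    have key : ∀ t a b : ℝ, 0 ≤ a → b ≤ T → a ≤ b →
        IntervalIntegrable (fun s => k s * v (t - s)) volume a b := by
      intro t a b ha hb hab
      rw [intervalIntegrable_iff_integrableOn_Ioc_of_le hab]
      exact integrableOn_Ioc_mul_bdd (hkint.mono_set (Ioc_subset_Ioc ha hb))
        (hvc.comp (continuous_const.sub continuous_id))
    intro t a b ha0 hb0 haT hbT
    rcases le_total a b with h | h
    · exact key t a b ha0 hbT h
    · exact (key t b a hb0 haT h).symm
  set F₁ : ℝ → ℝ := fun t => ∫ s in (0:ℝ)..t₀, k s * v (t - s) with hF₁def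
  set F₂ : ℝ → ℝ := fun t => ∫ s in t₀..t, k s * v (t - s) with hF₂def
  set G : ℝ → ℝ := fun t => ∫ s in t₀..t, k s * v (t₀ - s) with hGdef
  have hkm : AEStronglyMeasurable k (volume.restrict (Ioc 0 t₀)) :=
    hkint.1.mono_measure (Measure.restrict_mono (Ioc_subset_Ioc_right ht₀T.le) le_rfl)
  -- derivative of F₁
  have hF₁ : HasDerivAt F₁ (∫ s in (0:ℝ)..t₀, k s * Dv (t₀ - s)) t₀ := by
    have hΙ : Set.uIoc (0:ℝ) t₀ = Ioc 0 t₀ := uIoc_of_le ht₀0.le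
    refine (intervalIntegral.hasDerivAt_integral_of_dominated_loc_of_deriv_le
      (F := fun t s => k s * v (t - s)) (F' := fun t s => k s * Dv (t - s))
      (bound := fun s => ‖k s‖ * C) (Metric.ball_mem_nhds t₀ hδ) ?_ ?_ ?_ ?_ ?_ ?_).2
    · refine Filter.Eventually.of_forall fun x => ?_
      rw [hΙ]
      exact hkm.mul ((hvc.comp (continuous_const.sub continuous_id)).aestronglyMeasurable)
    · exact hIb t₀ 0 t₀ le_rfl ht₀0.le hT.le ht₀T.le
    · rw [hΙ]
      exact hkm.mul ((hdvc.comp (continuous_const.sub continuous_id)).aestronglyMeasurable)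
    · refine Filter.Eventually.of_forall fun s hs x hx => ?_
      rw [hΙ] at hs
      rw [Real.ball_eq_Ioo] at hx
      have hmem : x - s ∈ Icc (-T) T := by
        constructor
        · have : 0 < x := by linarith [hx.1, hs.2]
          have : s ≤ T := le_trans hs.2 ht₀T.le
          linarith
        · have : x < T := by linarith [hx.2]
          linarith [hs.1]
      rw [norm_mul]
      exact mul_le_mul_of_nonneg_left (hC _ hmem) (norm_nonneg _)
    · have : IntegrableOn (fun s => ‖k s‖ * C) (Ioc 0 t₀) :=
        ((hkint.mono_set (Ioc_subset_Ioc_right ht₀T.le)).norm).mul_const C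
      exact (intervalIntegrable_iff_integrableOn_Ioc_of_le ht₀0.le).2 this
    · refine Filter.Eventually.of_forall fun s hs x hx => ?_
      have h1 := ((hvd (x - s)).comp x ((hasDerivAt_id x).sub_const s))
      simpa using h1.const_mul (k s)
  -- derivative of G
  have hG : HasDerivAt G (k t₀ * v 0) t₀ := by
    have hcont : ContinuousAt (fun s => k s * v (t₀ - s)) t₀ :=
      ((hkderiv t₀ ⟨ht₀0, ht₀T⟩).continuousAt).mul
        ((hvc.comp (continuous_const.sub continuous_id)).continuousAt)
    have hmeasat : StronglyMeasurableAtFilter (fun s => k s * v (t₀ - s)) (𝓝 t₀) := by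
      refine ⟨Ioo 0 T, Ioo_mem_nhds ht₀0 ht₀T, ?_⟩
      have hkon : ContinuousOn k (Ioo 0 T) := fun x hx =>
        (hkderiv x hx).continuousAt.continuousWithinAt
      exact (hkon.mul ((hvc.comp (continuous_const.sub continuous_id)).continuousOn)
        ).aestronglyMeasurable measurableSet_Ioo
    have h := intervalIntegral.integral_hasDerivAt_right
      (IntervalIntegrable.refl (f := fun s => k s * v (t₀ - s)) (μ := volume) (a := t₀))
      hmeasat hcont
    simpa using h
  -- derivative of the remainder
  have hR : HasDerivAt (fun t => F₂ t - G t) 0 t₀ := by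
    set M : ℝ := k (t₀ - δ) with hMdef
    have htδ0 : (0:ℝ) < t₀ - δ := by linarith
    have htδT : t₀ - δ ≤ T := by linarith
    have hM0 : 0 ≤ M := hknn _ ⟨htδ0, htδT⟩
    have hRb : ∀ t ∈ Metric.ball t₀ δ, ‖F₂ t - G t‖ ≤ M * C * (|t - t₀| * |t - t₀|) := by
      intro t ht
      rw [Real.ball_eq_Ioo] at ht
      have ht0 : 0 < t := by linarith [ht.1]
      have htT : t < T := by linarith [ht.2]
      have hi1 : IntervalIntegrable (fun s => k s * v (t - s)) volume t₀ t :=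
        hIb t t₀ t ht₀0.le ht0.le ht₀T.le htT.le
      have hi2 : IntervalIntegrable (fun s => k s * v (t₀ - s)) volume t₀ t :=
        hIb t₀ t₀ t ht₀0.le ht0.le ht₀T.le htT.le
      have hdiff : F₂ t - G t = ∫ s in t₀..t, (k s * v (t - s) - k s * v (t₀ - s)) :=
        (intervalIntegral.integral_sub hi1 hi2).symm
      rw [hdiff]
      have hb : ∀ s ∈ Set.uIoc t₀ t, ‖k s * v (t - s) - k s * v (t₀ - s)‖ ≤ M * (C * |t - t₀|) := by
        intro s hs
        have hs1 : t₀ - δ ≤ s := by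
          rcases le_total t₀ t with h | h
          · rw [uIoc_of_le h] at hs; linarith [hs.1]
          · rw [uIoc_of_ge h] at hs; linarith [hs.1, ht.1]
        have hs2 : s ≤ T := by
          rcases le_total t₀ t with h | h
          · rw [uIoc_of_le h] at hs; linarith [hs.2, ht.2]
          · rw [uIoc_of_ge h] at hs; linarith [hs.2]
        have hs0 : 0 < s := lt_of_lt_of_le htδ0 hs1
        have hks : k s ≤ M := hkmono ⟨htδ0, htδT⟩ ⟨hs0, hs2⟩ hs1
        have hksn : ‖k s‖ = k s := by
          rw [Real.norm_eq_abs, abs_of_nonneg (hknn s ⟨hs0, hs2⟩)]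
        have hvdiff : ‖v (t - s) - v (t₀ - s)‖ ≤ C * |t - t₀| := by
          have heq : v (t - s) - v (t₀ - s) = ∫ x in (t₀ - s)..(t - s), Dv x :=
            (intervalIntegral.integral_eq_sub_of_hasDerivAt (fun x _ => hvd x)
              (hdvc.intervalIntegrable _ _)).symm
          rw [heq]
          have hbb : ∀ x ∈ Set.uIoc (t₀ - s) (t - s), ‖Dv x‖ ≤ C := by
            intro x hx
            have hx1 : min (t₀ - s) (t - s) ≤ x := le_of_lt (by
              rcases hx with ⟨h1, _⟩; exact h1)
            have hx2 : x ≤ max (t₀ - s) (t - s) := hx.2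
            have hA : -T ≤ t₀ - s := by linarith
            have hB : -T ≤ t - s := by linarith
            have hA' : t₀ - s ≤ T := by linarith
            have hB' : t - s ≤ T := by linarith
            refine hC x ⟨?_, ?_⟩
            · calc -T ≤ min (t₀ - s) (t - s) := le_min hA hB
                _ ≤ x := hx1
            · calc x ≤ max (t₀ - s) (t - s) := hx2
                _ ≤ T := max_le hA' hB'
          calc ‖∫ x in (t₀ - s)..(t - s), Dv x‖ ≤ C * |(t - s) - (t₀ - s)| :=
                intervalIntegral.norm_integral_le_of_norm_le_const hbb
            _ = C * |t - t₀| := by congr 1; ring_nf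
        calc ‖k s * v (t - s) - k s * v (t₀ - s)‖
            = ‖k s‖ * ‖v (t - s) - v (t₀ - s)‖ := by rw [← norm_mul]; congr 1; ring
          _ ≤ M * (C * |t - t₀|) := by
              refine mul_le_mul ?_ hvdiff (norm_nonneg _) hM0
              rw [hksn]; exact hks
      calc ‖∫ s in t₀..t, (k s * v (t - s) - k s * v (t₀ - s))‖
          ≤ M * (C * |t - t₀|) * |t - t₀| :=
            intervalIntegral.norm_integral_le_of_norm_le_const hb
        _ = M * C * (|t - t₀| * |t - t₀|) := by ring
    rw [hasDerivAt_iff_isLittleO]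
    have hzero : F₂ t₀ - G t₀ = 0 := by simp [hF₂def, hGdef]
    simp only [hzero, sub_zero, smul_zero]
    rw [Asymptotics.isLittleO_iff]
    intro c hc
    have hpos : (0:ℝ) < M * C + 1 := by positivity
    have hq : 0 < c / (M * C + 1) := by positivity
    filter_upwards [Metric.ball_mem_nhds t₀ hδ,
      Metric.closedBall_mem_nhds t₀ hq] with t ht ht'
    rw [Metric.mem_closedBall, Real.dist_eq] at ht'
    have h1 : ‖F₂ t - G t‖ ≤ M * C * (|t - t₀| * |t - t₀|) := hRb t ht
    have h2 : M * C * |t - t₀| ≤ c := by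
      have : M * C * |t - t₀| ≤ M * C * (c / (M * C + 1)) :=
        mul_le_mul_of_nonneg_left ht' (by positivity)
      have h3 : M * C * (c / (M * C + 1)) ≤ c := by
        rw [div_eq_mul_inv, ← mul_assoc]
        rw [show M * C * c * (M * C + 1)⁻¹ ≤ c ↔ M * C * c * (M * C + 1)⁻¹ ≤ c from Iff.rfl]
        have hle : M * C * c ≤ (M * C + 1) * c := by nlinarith
        calc M * C * c * (M * C + 1)⁻¹ ≤ (M * C + 1) * c * (M * C + 1)⁻¹ := by
              exact mul_le_mul_of_nonneg_right hle (by positivity)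
          _ = c := by field_simp
      linarith
    have hgoal : ‖F₂ t - G t - (t - t₀) * 0‖ ≤ c * ‖t - t₀‖ := by
      rw [mul_zero, sub_zero, Real.norm_eq_abs (t - t₀)]
      calc ‖F₂ t - G t‖ ≤ M * C * (|t - t₀| * |t - t₀|) := h1
        _ = (M * C * |t - t₀|) * |t - t₀| := by ring
        _ ≤ c * |t - t₀| := mul_le_mul_of_nonneg_right h2 (abs_nonneg _)
    simpa using hgoal
  -- combine
  have hF₂ : HasDerivAt F₂ (k t₀ * v 0) t₀ := by
    have heq : F₂ = fun t => G t + (F₂ t - G t) := by funext t; ring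
    rw [heq]
    exact (hG.add hR).congr_deriv (add_zero _)
  have hsum : HasDerivAt (fun t => F₁ t + F₂ t)
      ((∫ s in (0:ℝ)..t₀, k s * Dv (t₀ - s)) + k t₀ * v 0) t₀ := hF₁.add hF₂
  have heq : tconv k v =ᶠ[𝓝 t₀] fun t => F₁ t + F₂ t := by
    filter_upwards [Ioo_mem_nhds (show t₀ - δ < t₀ by linarith)
      (show t₀ < t₀ + δ by linarith)] with t ht
    have ht0 : 0 < t := by linarith [ht.1]
    have htT : t < T := by linarith [ht.2]
    have e0 : tconv k v t = ∫ s in (0:ℝ)..t, k (t - s) * v s := by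
      rw [tconv, intervalIntegral.integral_of_le ht0.le]
    have e1 : (∫ s in (0:ℝ)..t, k (t - s) * v s)
        = ∫ s in (0:ℝ)..t, (fun x => k x * v (t - x)) (t - s) := by
      refine intervalIntegral.integral_congr fun s _ => ?_
      simp [sub_sub_cancel]
    have e2 : (∫ s in (0:ℝ)..t, (fun x => k x * v (t - x)) (t - s))
        = ∫ s in (0:ℝ)..t, k s * v (t - s) := by
      rw [intervalIntegral.integral_comp_sub_left (fun x => k x * v (t - x)) t]
      simp
    have e3 : (∫ s in (0:ℝ)..t, k s * v (t - s)) = F₁ t + F₂ t := by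
      rw [hF₁def, hF₂def]
      exact (intervalIntegral.integral_add_adjacent_intervals
        (hIb t 0 t₀ le_rfl ht₀0.le hT.le ht₀T.le)
        (hIb t t₀ t ht₀0.le ht0.le ht₀T.le htT.le)).symm
    rw [e0, e1, e2, e3]
  have := hsum.congr_of_eventuallyEq heq
  exact this.congr_deriv (add_comm _ _)

/-- The derivative formula for the convolution, valid everywhere on `(0,T)`. -/
theorem key_deriv (T : ℝ) (k k' v : ℝ → ℝ)
    (hknn : ∀ t ∈ Ioc 0 T, 0 ≤ k t) (hkmono : AntitoneOn k (Ioc 0 T))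
    (hkint : IntegrableOn k (Ioc 0 T))
    (hkderiv : ∀ t ∈ Ioo 0 T, HasDerivAt k (k' t) t)
    (hk'int : IntegrableOn k' (Ioc 0 T))
    (hv : ContDiff ℝ 1 v) {t₀ : ℝ} (ht₀ : t₀ ∈ Ioo 0 T) :
    deriv (tconv k v) t₀ = k t₀ * v t₀ + ∫ s in Ioc 0 t₀, k' s * (v (t₀ - s) - v t₀) := by
  rw [(keyA T k k' v hknn hkmono hkint hkderiv hv ht₀).deriv,
    keyB T k k' v hkint hkderiv hk'int hv ht₀]
  ring

/-- Fundamental identity for the time-fractional derivative (Zacher). -/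
theorem fundamental_identity (T : ℝ) (hT : 0 < T) (H k k' u : ℝ → ℝ)
    (hH : ContDiff ℝ 1 H) (hHconv : ConvexOn ℝ Set.univ H)
    (hknn : ∀ t ∈ Ioc 0 T, 0 ≤ k t) (hkmono : AntitoneOn k (Ioc 0 T))
    (hkint : IntegrableOn k (Ioc 0 T))
    (hkderiv : ∀ t ∈ Ioo 0 T, HasDerivAt k (k' t) t)
    (hk'int : IntegrableOn k' (Ioc 0 T))
    (hu : ContDiff ℝ 1 u) :
    ∀ᵐ t ∂(volume.restrict (Ioo 0 T)),
      deriv H (u t) * deriv (tconv k u) t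
        = deriv (tconv k fun s => H (u s)) t
          + (deriv H (u t) * u t - H (u t)) * k t
          + ∫ s in Ioc 0 t,
              (H (u (t - s)) - H (u t) - deriv H (u t) * (u (t - s) - u t)) * (-(k' s)) := by
  have hHu : ContDiff ℝ 1 (fun s => H (u s)) := hH.comp hu
  filter_upwards [ae_restrict_mem measurableSet_Ioo] with t ht
  have h1 := key_deriv T k k' u hknn hkmono hkint hkderiv hk'int hu ht
  have h2 := key_deriv T k k' (fun s => H (u s)) hknn hkmono hkint hkderiv hk'int hHu ht
  rw [h1, h2]
  set DH := deriv H (u t) with hDH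
  have hk't : IntegrableOn k' (Ioc 0 t) := hk'int.mono_set (Ioc_subset_Ioc_right ht.2.le)
  have hcont1 : Continuous (fun s : ℝ => H (u (t - s)) - H (u t)) :=
    ((hH.continuous.comp (hu.continuous.comp (continuous_const.sub continuous_id))).sub
      continuous_const)
  have hcont2 : Continuous
      (fun s : ℝ => H (u (t - s)) - H (u t) - DH * (u (t - s) - u t)) := by
    refine hcont1.sub (continuous_const.mul ?_)
    exact (hu.continuous.comp (continuous_const.sub continuous_id)).sub continuous_const
  have hint1 : Integrable (fun s => k' s * (H (u (t - s)) - H (u t)))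
      (volume.restrict (Ioc 0 t)) :=
    integrableOn_Ioc_mul_bdd hk't hcont1
  have hint2 : Integrable
      (fun s => (H (u (t - s)) - H (u t) - DH * (u (t - s) - u t)) * (-(k' s)))
      (volume.restrict (Ioc 0 t)) := by
    obtain ⟨C, hC⟩ := isCompact_Icc.exists_bound_of_continuousOn
      (hcont2.continuousOn (s := Icc (0:ℝ) t))
    refine hk't.neg.bdd_mul (c := C) hcont2.aestronglyMeasurable ?_
    filter_upwards [ae_restrict_mem measurableSet_Ioc] with x hx
    exact hC x (Ioc_subset_Icc_self hx)
  have key : (∫ s in Ioc 0 t, k' s * (H (u (t - s)) - H (u t)))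
      + (∫ s in Ioc 0 t,
          (H (u (t - s)) - H (u t) - DH * (u (t - s) - u t)) * (-(k' s)))
      = DH * ∫ s in Ioc 0 t, k' s * (u (t - s) - u t) := by
    rw [← integral_add hint1 hint2, ← integral_const_mul]
    exact integral_congr_ae (ae_of_all _ fun s => by ring)
  linear_combination -key
end
end

section
/- Let $k \in W^{1,1}([0,T])$ be nonnegative and nonincreasing and let $u \in W^{1,2}([0,T])$. Then for a.e. $t \in (0,T)$, $u^-(t)\,\frac{d}{dt}(k*u)(t) \leq -\frac{1}{2}\frac{d}{dt}\big(k*(u^-)^2\big)(t)$, where $u^- = \max\{-u,0\}$. -/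
open MeasureTheory Set

open Filter Topology intervalIntegral

noncomputable section

/-- convexity-type elementary inequality -/
lemma neg_part_convex_ineq (a b : ℝ) :
    -(max (-b) 0)^2 ≤ 2 * max (-b) 0 * a + (max (-a) 0)^2 := by
  set α := max (-a) 0 with hα
  set β := max (-b) 0 with hβ
  have hβ0 : 0 ≤ β := le_max_right _ _
  have haα : 0 ≤ a + α := by
    have : -a ≤ α := le_max_left _ _
    linarith
  nlinarith [sq_nonneg (α - β), mul_nonneg hβ0 haα]

/-- derivative of an antitone function is nonpositive -/
lemma deriv_nonpos_of_antitoneOn {T : ℝ} {k k' : ℝ → ℝ}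
    (hkmono : AntitoneOn k (Ioc 0 T))
    (hkderiv : ∀ t ∈ Ioo 0 T, HasDerivAt k (k' t) t)
    {s : ℝ} (hs : s ∈ Ioo 0 T) : k' s ≤ 0 := by
  have h := (hasDerivAt_iff_tendsto_slope.1 (hkderiv s hs))
  refine le_of_tendsto h ?_
  have hmem : Ioo (0:ℝ) T ∈ 𝓝[≠] s := nhdsWithin_le_nhds (Ioo_mem_nhds hs.1 hs.2)
  filter_upwards [hmem, self_mem_nhdsWithin] with y hy hyne
  rcases lt_or_gt_of_ne (hyne : y ≠ s) with hlt | hgt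
  · have hk : k s ≤ k y := hkmono (Ioo_subset_Ioc_self hy) (Ioo_subset_Ioc_self hs) hlt.le
    have : slope k s y = (k y - k s) / (y - s) := slope_def_field k s y
    rw [this]
    apply div_nonpos_of_nonneg_of_nonpos <;> linarith
  · have hk : k y ≤ k s := hkmono (Ioo_subset_Ioc_self hs) (Ioo_subset_Ioc_self hy) hgt.le
    have : slope k s y = (k y - k s) / (y - s) := slope_def_field k s y
    rw [this]
    apply div_nonpos_of_nonpos_of_nonneg <;> linarith

/-- kernel representation: k τ = k0 + ∫_0^τ k' -/
lemma kernel_rep {T : ℝ} (hT : 0 < T) {k k' : ℝ → ℝ}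
    (hkderiv : ∀ t ∈ Ioo 0 T, HasDerivAt k (k' t) t)
    (hk'int : IntegrableOn k' (Ioc 0 T)) :
    ∃ k0 : ℝ, ∀ τ ∈ Ioo 0 T, k τ = k0 + ∫ r in Ioc 0 τ, k' r := by
  set c : ℝ := T / 2 with hc
  have hcmem : c ∈ Ioo (0:ℝ) T := ⟨by positivity, by linarith⟩
  refine ⟨k c - ∫ r in Ioc 0 c, k' r, fun τ hτ => ?_⟩
  have hint : ∀ a b : ℝ, a ∈ Ioo (0:ℝ) T → b ∈ Ioo (0:ℝ) T → IntervalIntegrable k' volume a b := by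
    intro a b ha hb
    rw [intervalIntegrable_iff]
    refine hk'int.mono_set ?_
    intro x hx
    rcases le_total a b with h | h
    · rw [uIoc_of_le h] at hx; exact ⟨lt_of_lt_of_le ha.1 hx.1.le, hx.2.trans hb.2.le⟩
    · rw [uIoc_of_ge h] at hx; exact ⟨lt_of_lt_of_le hb.1 hx.1.le, hx.2.trans ha.2.le⟩
  have hftc : ∫ r in c..τ, k' r = k τ - k c := by
    refine integral_eq_sub_of_hasDerivAt (fun x hx => hkderiv x ?_) (hint c τ hcmem hτ)
    rcases le_total c τ with h | h
    · rw [uIcc_of_le h] at hx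
      exact ⟨lt_of_lt_of_le hcmem.1 hx.1, lt_of_le_of_lt hx.2 hτ.2⟩
    · rw [uIcc_of_ge h] at hx
      exact ⟨lt_of_lt_of_le hτ.1 hx.1, lt_of_le_of_lt hx.2 hcmem.2⟩
  have hintc0 : IntervalIntegrable k' volume 0 c := by
    rw [intervalIntegrable_iff, uIoc_of_le hcmem.1.le]
    exact hk'int.mono_set (Ioc_subset_Ioc le_rfl hcmem.2.le)
  have hintcτ : IntervalIntegrable k' volume c τ := hint c τ hcmem hτ
  have hadj : (∫ r in (0:ℝ)..c, k' r) + ∫ r in c..τ, k' r = ∫ r in (0:ℝ)..τ, k' r :=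
    integral_add_adjacent_intervals hintc0 hintcτ
  rw [integral_of_le hcmem.1.le, integral_of_le hτ.1.le] at hadj
  linarith [hftc, hadj]



lemma tconv_hasDerivAt {T : ℝ} (hT : 0 < T) (k k' w : ℝ → ℝ) (M : ℝ)
    (hk'int : IntegrableOn k' (Ioc 0 T))
    (hw : ContinuousOn w (Ioo 0 T))
    (hwM : ∀ x ∈ Ioo 0 T, |w x| ≤ M)
    (k0 : ℝ) (hkrep : ∀ τ ∈ Ioo 0 T, k τ = k0 + ∫ r in Ioc 0 τ, k' r)
    {t : ℝ} (ht : t ∈ Ioo 0 T) :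
    HasDerivAt (tconv k w)
      (k0 * w t + ∫ s in Ioc 0 t, k' s * (Ioo 0 T).indicator w (t - s)) t := by
  have hM0 : 0 ≤ M := le_trans (abs_nonneg _) (hwM (T/2) ⟨by positivity, by linarith⟩)
  set wt := (Ioo 0 T).indicator w with hwt
  have hwt_bd : ∀ x, |wt x| ≤ M := by
    intro x
    by_cases h : x ∈ Ioo 0 T
    · rw [hwt, indicator_of_mem h]; exact hwM x h
    · rw [hwt, indicator_of_notMem h]; simpa using hM0
  have hwt_meas : AEStronglyMeasurable wt volume :=
    (aestronglyMeasurable_indicator_iff measurableSet_Ioo).2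
      (hw.aestronglyMeasurable measurableSet_Ioo)
  haveI : IsFiniteMeasure (volume.restrict (Ioo (0:ℝ) T)) := by
    constructor
    rw [Measure.restrict_apply_univ, Real.volume_Ioo]
    exact ENNReal.ofReal_lt_top
  have hwt_int : Integrable wt volume := by
    have h1 : IntegrableOn w (Ioo 0 T) volume := by
      refine Integrable.mono' (integrable_const M) (hw.aestronglyMeasurable measurableSet_Ioo) ?_
      refine (ae_restrict_iff' measurableSet_Ioo).2 (Eventually.of_forall fun x hx => ?_)
      simpa [Real.norm_eq_abs] using hwM x hx
    exact h1.integrable_indicator measurableSet_Ioo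
  set kt' := (Ioc 0 T).indicator k' with hkt'
  have hkt'_int : Integrable kt' volume := hk'int.integrable_indicator measurableSet_Ioc
  set W := fun x : ℝ => ∫ r in (0:ℝ)..x, wt r with hWdef
  have hW_cont : Continuous W :=
    intervalIntegral.continuous_primitive (fun a b => hwt_int.intervalIntegrable) 0
  have hW_zero : ∀ x : ℝ, x ≤ 0 → W x = 0 := by
    intro x hx
    have h0 : ∫ r in Ioc x 0, wt r = 0 := by
      have heq : EqOn wt (fun _ => (0:ℝ)) (Ioc x 0) := fun r hr =>
        indicator_of_notMem (fun hm => absurd hm.1 (not_lt.2 hr.2)) w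
      rw [setIntegral_congr_fun measurableSet_Ioc heq, MeasureTheory.integral_zero]
    rw [hWdef]
    simp only
    rw [intervalIntegral.integral_symm, integral_of_le hx, h0, neg_zero]
  have hW_Ioc : ∀ x : ℝ, 0 ≤ x → W x = ∫ r in Ioc 0 x, wt r := fun x hx => integral_of_le hx
  have hW_lip : ∀ x y : ℝ, |W y - W x| ≤ M * |y - x| := by
    intro x y
    have hadd : W x + ∫ r in x..y, wt r = W y :=
      integral_add_adjacent_intervals hwt_int.intervalIntegrable hwt_int.intervalIntegrable
    have : W y - W x = ∫ r in x..y, wt r := by linarith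
    rw [← Real.norm_eq_abs, this]
    exact intervalIntegral.norm_integral_le_of_norm_le_const fun r _ => by
      rw [Real.norm_eq_abs]; exact hwt_bd r
  have hW_bdT : ∀ x : ℝ, 0 ≤ x → x ≤ T → |W x| ≤ M * T := by
    intro x hx0 hxT
    have := hW_lip 0 x
    rw [hW_zero 0 le_rfl, sub_zero] at this
    calc |W x| ≤ M * |x - 0| := this
    _ ≤ M * T := by rw [sub_zero, abs_of_nonneg hx0]; exact mul_le_mul_of_nonneg_left hxT hM0
  have hW_bd : ∀ x : ℝ, |W x| ≤ M * T := by
    intro x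
    rcases le_or_gt x 0 with h | h
    · rw [hW_zero x h]; simpa using mul_nonneg hM0 hT.le
    rcases le_or_gt x T with h2 | h2
    · exact hW_bdT x h.le h2
    · have hWx : W x = W T := by
        have hadd : W T + ∫ r in T..x, wt r = W x :=
          integral_add_adjacent_intervals hwt_int.intervalIntegrable hwt_int.intervalIntegrable
        have h0 : ∫ r in T..x, wt r = 0 := by
          have heq : EqOn wt (fun _ => (0:ℝ)) (Ioc T x) := fun r hr =>
            indicator_of_notMem (fun hm => absurd hm.2 (not_lt.2 hr.1.le)) w
          rw [integral_of_le h2.le, setIntegral_congr_fun measurableSet_Ioc heq, MeasureTheory.integral_zero]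
        linarith
      rw [hWx]; exact hW_bdT T hT.le le_rfl
  have hW_deriv_pos : ∀ x ∈ Ioo (0:ℝ) T, HasDerivAt W (wt x) x := by
    intro x hx
    have hev : w =ᶠ[𝓝 x] wt :=
      eventually_of_mem (Ioo_mem_nhds hx.1 hx.2) fun y hy => (indicator_of_mem hy w).symm
    have hc : ContinuousAt wt x :=
      ((hw.continuousAt (Ioo_mem_nhds hx.1 hx.2))).congr hev
    exact intervalIntegral.integral_hasDerivAt_right hwt_int.intervalIntegrable
      hwt_int.aestronglyMeasurable.stronglyMeasurableAtFilter hc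
  have hW_deriv_neg : ∀ x : ℝ, x < 0 → HasDerivAt W 0 x := by
    intro x hx
    have hev : W =ᶠ[𝓝 x] fun _ => (0:ℝ) :=
      eventually_of_mem (Iio_mem_nhds hx) fun y hy => hW_zero y (le_of_lt hy)
    exact (hasDerivAt_const x (0:ℝ)).congr_of_eventuallyEq hev
  set Φ := fun y : ℝ => ∫ r : ℝ, kt' r * W (y - r) with hΦ
  have hΦint : ∀ y : ℝ, Integrable (fun r => kt' r * W (y - r)) volume := by
    intro y
    have := hkt'_int.bdd_mul
      ((hW_cont.comp (continuous_const.sub continuous_id)).aestronglyMeasurable)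
      (c := M * T) (Eventually.of_forall fun x => by simpa [Real.norm_eq_abs] using hW_bd (y - x))
    simpa [mul_comm] using this
  -- representation: tconv k w y = k0 * W y + Φ y on Ioo 0 T
  set K' := fun x : ℝ => ∫ r in (0:ℝ)..x, kt' r with hK'def
  have hK'cont : Continuous K' :=
    intervalIntegral.continuous_primitive (fun a b => hkt'_int.intervalIntegrable) 0
  have hK'bd : ∀ x : ℝ, ‖K' x‖ ≤ ∫ r : ℝ, ‖kt' r‖ := by
    intro x
    calc ‖K' x‖ ≤ ∫ r in Set.uIoc 0 x, ‖kt' r‖ := intervalIntegral.norm_integral_le_integral_norm_uIoc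
    _ ≤ ∫ r : ℝ, ‖kt' r‖ :=
        setIntegral_le_integral hkt'_int.norm (Eventually.of_forall fun r => norm_nonneg _)
  have hrep : ∀ y ∈ Ioo (0:ℝ) T, tconv k w y = k0 * W y + Φ y := by
    intro y hy
    have hy0 : (0:ℝ) ≤ y := hy.1.le
    have hIoo : tconv k w y = ∫ s in Ioo 0 y, (k0 * wt s + K' (y - s) * wt s) := by
      rw [tconv, integral_Ioc_eq_integral_Ioo]
      refine setIntegral_congr_fun measurableSet_Ioo fun s hs => ?_
      have hsT : s ∈ Ioo (0:ℝ) T := ⟨hs.1, hs.2.trans hy.2⟩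
      have hys : y - s ∈ Ioo (0:ℝ) T := ⟨by linarith [hs.2], by linarith [hy.2, hs.1]⟩
      have h1 : k (y - s) = k0 + K' (y - s) := by
        rw [hkrep _ hys]
        congr 1
        have : K' (y - s) = ∫ r in Ioc 0 (y - s), kt' r := integral_of_le hys.1.le
        rw [this]
        refine setIntegral_congr_fun measurableSet_Ioc fun r hr => ?_
        exact (indicator_of_mem (show r ∈ Ioc (0:ℝ) T from ⟨hr.1, hr.2.trans (by linarith [hy.2, hs.1])⟩) k').symm
      have h2 : w s = wt s := (indicator_of_mem hsT w).symm
      rw [h1, h2]; ring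
    have hint1 : IntegrableOn (fun s => k0 * wt s) (Ioo 0 y) volume :=
      (hwt_int.const_mul k0).integrableOn
    have hint2g : Integrable (fun s => K' (y - s) * wt s) volume :=
      hwt_int.bdd_mul ((hK'cont.comp (continuous_const.sub continuous_id)).aestronglyMeasurable)
        (c := ∫ r : ℝ, ‖kt' r‖) (Eventually.of_forall fun x => hK'bd (y - x))
    have hint2 : IntegrableOn (fun s => K' (y - s) * wt s) (Ioo 0 y) volume := hint2g.integrableOn
    rw [hIoo, integral_add hint1 hint2]
    congr 1
    · rw [MeasureTheory.integral_const_mul, hW_Ioc y hy0, integral_Ioc_eq_integral_Ioo]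
    -- Fubini
    set S : Set (ℝ × ℝ) := {p | p.1 ∈ Ioo 0 y ∧ p.2 ∈ Ioc 0 (y - p.1)} with hSdef
    have hSm : MeasurableSet S := by
      have h1 : MeasurableSet {p : ℝ × ℝ | p.1 ∈ Ioo 0 y} :=
        measurable_fst measurableSet_Ioo
      have h2 : MeasurableSet {p : ℝ × ℝ | 0 < p.2} := measurable_snd measurableSet_Ioi
      have h3 : MeasurableSet {p : ℝ × ℝ | p.2 ≤ y - p.1} :=
        measurableSet_le measurable_snd (measurable_const.sub measurable_fst)
      have : S = {p : ℝ × ℝ | p.1 ∈ Ioo 0 y} ∩ ({p : ℝ × ℝ | 0 < p.2} ∩ {p : ℝ × ℝ | p.2 ≤ y - p.1}) := by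
        ext p; simp [hSdef, Set.mem_Ioc, and_assoc]
      rw [this]; exact h1.inter (h2.inter h3)
    set G : ℝ × ℝ → ℝ := S.indicator fun p => wt p.1 * kt' p.2 with hGdef
    have hGint : Integrable G (volume.prod volume) := (hwt_int.mul_prod hkt'_int).indicator hSm
    have hswap : ∫ s : ℝ, ∫ r : ℝ, G (s, r) = ∫ r : ℝ, ∫ s : ℝ, G (s, r) := by
      refine integral_integral_swap ?_
      exact hGint
    have hL : ∫ s : ℝ, ∫ r : ℝ, G (s, r) = ∫ s in Ioo 0 y, K' (y - s) * wt s := by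
      have hfun : ∀ s : ℝ, (∫ r : ℝ, G (s, r)) = (Ioo 0 y).indicator (fun s => wt s * K' (y - s)) s := by
        intro s
        by_cases hs : s ∈ Ioo (0:ℝ) y
        · have hsec : ∀ r : ℝ, G (s, r) = (Ioc 0 (y - s)).indicator (fun r => wt s * kt' r) r := by
            intro r
            by_cases hr : r ∈ Ioc (0:ℝ) (y - s)
            · rw [indicator_of_mem hr, hGdef,
                Set.indicator_of_mem (show (s, r) ∈ S from ⟨hs, hr⟩)]
            · rw [indicator_of_notMem hr, hGdef,
                Set.indicator_of_notMem (fun hm => hr hm.2)]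
          rw [indicator_of_mem hs]
          simp only [hsec]
          rw [MeasureTheory.integral_indicator measurableSet_Ioc, MeasureTheory.integral_const_mul]
          congr 1
          exact (integral_of_le (by linarith [hs.2] : (0:ℝ) ≤ y - s)).symm
        · have hsec : ∀ r : ℝ, G (s, r) = 0 := fun r =>
            Set.indicator_of_notMem (fun hm => hs hm.1) _
          rw [indicator_of_notMem hs]
          simp [hsec]
      rw [integral_congr_ae (Eventually.of_forall hfun), MeasureTheory.integral_indicator measurableSet_Ioo]
      exact setIntegral_congr_fun measurableSet_Ioo fun s _ => mul_comm _ _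
    have hR : ∫ r : ℝ, ∫ s : ℝ, G (s, r) = Φ y := by
      have hfun : ∀ r : ℝ, (∫ s : ℝ, G (s, r)) = kt' r * W (y - r) := by
        intro r
        by_cases hr : 0 < r
        · have hsec : ∀ s : ℝ, G (s, r) = (Ioc 0 (y - r)).indicator (fun s => wt s * kt' r) s := by
            intro s
            by_cases hs : s ∈ Ioc (0:ℝ) (y - r)
            · have hmem : (s, r) ∈ S :=
                ⟨⟨hs.1, by linarith [hs.2, hr]⟩, ⟨hr, by linarith [hs.2]⟩⟩
              rw [hGdef, Set.indicator_of_mem hmem, indicator_of_mem hs]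
            · rw [indicator_of_notMem hs, hGdef]
              refine Set.indicator_of_notMem ?_ _
              rintro ⟨hm1, hm2⟩
              exact hs ⟨hm1.1, by linarith [hm2.2]⟩
          simp only [hsec]
          rw [MeasureTheory.integral_indicator measurableSet_Ioc, MeasureTheory.integral_mul_const]
          rcases le_or_gt 0 (y - r) with h | h
          · rw [← hW_Ioc _ h]; ring
          · rw [Ioc_eq_empty (by exact not_lt.2 h.le), hW_zero _ h.le]
            simp
        · have h0 : kt' r = 0 := indicator_of_notMem (fun hm => hr hm.1) k'
          have hsec : ∀ s : ℝ, G (s, r) = 0 := by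
            intro s
            refine Set.indicator_of_notMem ?_ _
            rintro ⟨_, hm2⟩
            exact hr hm2.1
          simp [hsec, h0]
      rw [integral_congr_ae (Eventually.of_forall hfun)]
    rw [← hL, hswap, hR]
  -- derivative of Φ at t
  have hΦd : HasDerivAt Φ (∫ r : ℝ, kt' r * wt (t - r)) t := by
    rw [hasDerivAt_iff_tendsto_slope]
    have hslope : ∀ y : ℝ, y ≠ t →
        slope Φ t y = ∫ r : ℝ, kt' r * ((W (y - r) - W (t - r)) / (y - t)) := by
      intro y hy
      rw [slope_def_field, hΦ]
      simp only
      rw [← integral_sub (hΦint y) (hΦint t), ← MeasureTheory.integral_div]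
      exact integral_congr_ae (Eventually.of_forall fun r => by ring)
    have hmain : Tendsto (fun y => ∫ r : ℝ, kt' r * ((W (y - r) - W (t - r)) / (y - t)))
        (𝓝[≠] t) (𝓝 (∫ r : ℝ, kt' r * wt (t - r))) := by
      refine tendsto_integral_filter_of_dominated_convergence (fun r => ‖kt' r‖ * M)
        ?_ ?_ ?_ ?_
      · refine Eventually.of_forall fun y => ?_
        exact hkt'_int.aestronglyMeasurable.mul
          ((((hW_cont.comp (continuous_const.sub continuous_id)).sub
            (hW_cont.comp (continuous_const.sub continuous_id))).div_const _).aestronglyMeasurable)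
      · filter_upwards [self_mem_nhdsWithin] with y hy
        refine Eventually.of_forall fun r => ?_
        have hyt : y ≠ t := hy
        have habs : |y - t| > 0 := abs_pos.2 (sub_ne_zero.2 hyt)
        rw [norm_mul]
        refine mul_le_mul_of_nonneg_left ?_ (norm_nonneg _)
        rw [norm_div, Real.norm_eq_abs, Real.norm_eq_abs]
        rw [div_le_iff₀ habs]
        calc |W (y - r) - W (t - r)| ≤ M * |(y - r) - (t - r)| := hW_lip (t - r) (y - r)
        _ = M * |y - t| := by ring_nf
      · exact hkt'_int.norm.mul_const M
      · have hae : ∀ᵐ r : ℝ, r ≠ t := by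
          rw [ae_iff]
          have : {a : ℝ | ¬a ≠ t} = {t} := by ext a; simp
          rw [this]
          exact measure_singleton t
        filter_upwards [hae] with r hr
        by_cases hrT : r ∈ Ioc (0:ℝ) T
        · have hx : t - r ≠ 0 := sub_ne_zero.2 (Ne.symm hr)
          rcases lt_or_gt_of_ne hx with hneg | hpos
          · have hwt0 : wt (t - r) = 0 :=
              indicator_of_notMem (fun hm => absurd hm.1 (not_lt.2 hneg.le)) w
            have hev : ∀ᶠ y in 𝓝[≠] t,
                (0:ℝ) = kt' r * ((W (y - r) - W (t - r)) / (y - t)) := by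
              have hy0 : ∀ᶠ y in 𝓝 t, y - r < 0 := by
                have htr : t < r := by linarith
                filter_upwards [Iio_mem_nhds htr] with y hy
                exact sub_neg.2 hy
              filter_upwards [nhdsWithin_le_nhds hy0] with y hy
              rw [hW_zero _ hy.le, hW_zero _ hneg.le]
              simp
            rw [hwt0, mul_zero]
            exact Tendsto.congr' hev tendsto_const_nhds
          · have hxo : t - r ∈ Ioo (0:ℝ) T := ⟨hpos, by linarith [ht.2, hrT.1]⟩
            have hWd : HasDerivAt (fun y => W (y - r)) (wt (t - r)) t := by
              have := (hW_deriv_pos _ hxo).comp t ((hasDerivAt_id t).sub_const r)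
              simpa [Function.comp_def] using this
            have h1 := hasDerivAt_iff_tendsto_slope.1 hWd
            have h2 : Tendsto (fun y => kt' r * slope (fun z => W (z - r)) t y)
                (𝓝[≠] t) (𝓝 (kt' r * wt (t - r))) := h1.const_mul _
            refine h2.congr fun y => ?_
            rw [slope_def_field]
        · have h0 : kt' r = 0 := indicator_of_notMem hrT k'
          rw [h0]
          simpa using tendsto_const_nhds
    refine Tendsto.congr' ?_ hmain
    filter_upwards [self_mem_nhdsWithin] with y hy
    exact (hslope y hy).symm
  -- derivative of k0 * W
  have hWd0 : HasDerivAt (fun y => k0 * W y) (k0 * wt t) t := (hW_deriv_pos t ht).const_mul k0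
  have hsum := hWd0.add hΦd
  have hev : tconv k w =ᶠ[𝓝 t] fun y => k0 * W y + Φ y :=
    eventually_of_mem (Ioo_mem_nhds ht.1 ht.2) fun y hy => hrep y hy
  have hD := hsum.congr_of_eventuallyEq hev
  -- identify the derivative value
  have hwtt : wt t = w t := indicator_of_mem ht w
  have hintval : ∫ r : ℝ, kt' r * wt (t - r) = ∫ s in Ioc 0 t, k' s * wt (t - s) := by
    have h1 : ∀ r : ℝ, kt' r * wt (t - r)
        = (Ioc 0 T).indicator (fun s => k' s * wt (t - s)) r := by
      intro r
      by_cases hr : r ∈ Ioc (0:ℝ) T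
      · rw [hkt', indicator_of_mem hr, indicator_of_mem hr]
      · rw [hkt', indicator_of_notMem hr, indicator_of_notMem hr, zero_mul]
    rw [integral_congr_ae (Eventually.of_forall h1),
      MeasureTheory.integral_indicator measurableSet_Ioc]
    -- split Ioc 0 T = Ioc 0 t ∪ Ioc t T
    have hwtc : AEStronglyMeasurable (fun s => wt (t - s)) volume := by
      have := hwt_meas.comp_quasiMeasurePreserving
        (quasiMeasurePreserving_sub_left_of_right_invariant volume t)
      exact this
    have hintOn : ∀ A : Set ℝ, MeasurableSet A → A ⊆ Ioc 0 T →
        IntegrableOn (fun s => k' s * wt (t - s)) A volume := by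
      intro A hAm hA
      have hbase : IntegrableOn (fun s => wt (t - s) * k' s) A volume := by
        refine Integrable.bdd_mul (hk'int.mono_set hA) hwtc.restrict (c := M) (Eventually.of_forall fun x => ?_)
        rw [Real.norm_eq_abs]; exact hwt_bd _
      exact hbase.congr_fun (fun s _ => mul_comm _ _) hAm
    have hdisj : Disjoint (Ioc (0:ℝ) t) (Ioc t T) :=
      Ioc_disjoint_Ioc.2 (le_trans inf_le_left le_sup_right)
    rw [← Ioc_union_Ioc_eq_Ioc ht.1.le ht.2.le,
      setIntegral_union hdisj measurableSet_Ioc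
        (hintOn _ measurableSet_Ioc (Ioc_subset_Ioc le_rfl ht.2.le))
        (hintOn _ measurableSet_Ioc (Ioc_subset_Ioc ht.1.le le_rfl))]
    have hzero : ∫ s in Ioc t T, k' s * wt (t - s) = 0 := by
      have heq : EqOn (fun s => k' s * wt (t - s)) (fun _ => (0:ℝ)) (Ioc t T) := by
        intro s hs
        have : wt (t - s) = 0 :=
          indicator_of_notMem (fun hm => absurd hm.1 (by simp; linarith [hs.1])) w
        simp [this]
      rw [setIntegral_congr_fun measurableSet_Ioc heq, MeasureTheory.integral_zero]
    rw [hzero, add_zero]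
  rw [hwtt, hintval] at hD
  exact hD


theorem negative_part_inequality (T : ℝ) (hT : 0 < T) (k k' u u' : ℝ → ℝ)
    (hknn : ∀ t ∈ Ioc 0 T, 0 ≤ k t) (hkmono : AntitoneOn k (Ioc 0 T))
    (hkint : IntegrableOn k (Ioc 0 T))
    (hkderiv : ∀ t ∈ Ioo 0 T, HasDerivAt k (k' t) t)
    (hk'int : IntegrableOn k' (Ioc 0 T))
    (huderiv : ∀ t ∈ Ioo 0 T, HasDerivAt u (u' t) t)
    (hu2 : MemLp u 2 (volume.restrict (Ioc 0 T)))
    (hu'2 : MemLp u' 2 (volume.restrict (Ioc 0 T))) :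
    ∀ᵐ t ∂(volume.restrict (Ioo 0 T)),
      max (-u t) 0 * deriv (tconv k u) t
        ≤ -((1 / 2) * deriv (tconv k fun s => (max (-u s) 0) ^ 2) t) := by
  haveI : IsFiniteMeasure (volume.restrict (Ioc (0:ℝ) T)) := by
    constructor
    rw [Measure.restrict_apply_univ, Real.volume_Ioc]
    exact ENNReal.ofReal_lt_top
  have hu'int : IntegrableOn u' (Ioc 0 T) volume := hu'2.integrable (by norm_num)
  set M : ℝ := |u (T/2)| + ∫ s in Ioc 0 T, |u' s| with hM
  have hInorm : 0 ≤ ∫ s in Ioc 0 T, |u' s| := integral_nonneg fun s => abs_nonneg _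
  have huC : ContinuousOn u (Ioo 0 T) := fun x hx =>
    (huderiv x hx).continuousAt.continuousWithinAt
  have hmid : (T/2) ∈ Ioo (0:ℝ) T := ⟨by positivity, by linarith⟩
  have hsub : ∀ x ∈ Ioo (0:ℝ) T, Set.uIoc (T/2) x ⊆ Ioc 0 T := by
    intro x hx r hr
    rcases le_total (T/2) x with h | h
    · rw [uIoc_of_le h] at hr; exact ⟨lt_of_lt_of_le hmid.1 hr.1.le, hr.2.trans hx.2.le⟩
    · rw [uIoc_of_ge h] at hr; exact ⟨lt_of_lt_of_le hx.1 hr.1.le, hr.2.trans hmid.2.le⟩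
  have huM : ∀ x ∈ Ioo 0 T, |u x| ≤ M := by
    intro x hx
    have hintI : IntervalIntegrable u' volume (T/2) x := by
      rw [intervalIntegrable_iff]; exact hu'int.mono_set (hsub x hx)
    have hftc : ∫ r in (T/2)..x, u' r = u x - u (T/2) := by
      refine integral_eq_sub_of_hasDerivAt (fun r hr => huderiv r ?_) hintI
      rcases le_total (T/2) x with h | h
      · rw [uIcc_of_le h] at hr
        exact ⟨lt_of_lt_of_le hmid.1 hr.1, lt_of_le_of_lt hr.2 hx.2⟩
      · rw [uIcc_of_ge h] at hr
        exact ⟨lt_of_lt_of_le hx.1 hr.1, lt_of_le_of_lt hr.2 hmid.2⟩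
    have hb : |u x - u (T/2)| ≤ ∫ s in Ioc 0 T, |u' s| := by
      rw [← hftc, ← Real.norm_eq_abs]
      calc ‖∫ r in (T/2)..x, u' r‖ ≤ ∫ r in Set.uIoc (T/2) x, ‖u' r‖ :=
            intervalIntegral.norm_integral_le_integral_norm_uIoc
      _ ≤ ∫ s in Ioc 0 T, |u' s| := by
          simp only [Real.norm_eq_abs]
          exact setIntegral_mono_set hu'int.abs
            (Eventually.of_forall fun r => abs_nonneg _)
            (HasSubset.Subset.eventuallyLE (hsub x hx))
    calc |u x| = |u (T/2) + (u x - u (T/2))| := by ring_nf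
    _ ≤ |u (T/2)| + |u x - u (T/2)| := abs_add_le _ _
    _ ≤ M := by rw [hM]; linarith
  have hM0 : 0 ≤ M := le_trans (abs_nonneg _) (huM (T/2) hmid)
  obtain ⟨k0, hkrep⟩ := kernel_rep hT hkderiv hk'int
  set w2 : ℝ → ℝ := fun s => max (-u s) 0 ^ 2 with hw2
  have hw2C : ContinuousOn w2 (Ioo 0 T) := fun x hx =>
    (((huC x hx).neg).max continuousWithinAt_const).pow 2
  have hw2M : ∀ x ∈ Ioo 0 T, |w2 x| ≤ M ^ 2 := by
    intro x hx
    have h1 : max (-u x) 0 ≤ |u x| := max_le (neg_le_abs _) (abs_nonneg _)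
    have h2 : (0:ℝ) ≤ max (-u x) 0 := le_max_right _ _
    have : w2 x = max (-u x) 0 ^ 2 := by rw [hw2]
    rw [this, abs_of_nonneg (pow_nonneg h2 2)]
    calc max (-u x) 0 ^ 2 ≤ |u x| ^ 2 := pow_le_pow_left₀ h2 h1 2
    _ ≤ M ^ 2 := pow_le_pow_left₀ (abs_nonneg _) (huM x hx) 2
  filter_upwards [ae_restrict_mem measurableSet_Ioo] with t ht
  have hd1 := tconv_hasDerivAt hT k k' u M hk'int huC huM k0 hkrep ht
  have hd2 := tconv_hasDerivAt hT k k' w2 (M ^ 2) hk'int hw2C hw2M k0 hkrep ht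
  rw [hd1.deriv, hd2.deriv]
  set β : ℝ := max (-u t) 0 with hβ
  set I1 : ℝ := ∫ s in Ioc 0 t, k' s * (Ioo 0 T).indicator u (t - s) with hI1
  set I2 : ℝ := ∫ s in Ioc 0 t, k' s * (Ioo 0 T).indicator w2 (t - s) with hI2
  have hβ0 : 0 ≤ β := le_max_right _ _
  have hβu : β * u t = -β ^ 2 := by
    rw [hβ]
    rcases le_or_gt (u t) 0 with h | h
    · rw [max_eq_left (by linarith : (0:ℝ) ≤ -u t)]; ring
    · rw [max_eq_right (by linarith : -u t ≤ (0:ℝ))]; ring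
  have hw2t : w2 t = β ^ 2 := by rw [hw2]
  -- integrability of the integrands on Ioc 0 t
  have hIocsub : Ioc (0:ℝ) t ⊆ Ioc 0 T := Ioc_subset_Ioc le_rfl ht.2.le
  have hmkint : ∀ (v : ℝ → ℝ) (C : ℝ), ContinuousOn v (Ioo 0 T) → (∀ x ∈ Ioo 0 T, |v x| ≤ C) →
      IntegrableOn (fun s => k' s * (Ioo 0 T).indicator v (t - s)) (Ioc 0 t) volume := by
    intro v C hvC hvM
    have hvmeas : AEStronglyMeasurable ((Ioo 0 T).indicator v) volume :=
      (aestronglyMeasurable_indicator_iff measurableSet_Ioo).2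
        (hvC.aestronglyMeasurable measurableSet_Ioo)
    have hvc : AEStronglyMeasurable (fun s => (Ioo 0 T).indicator v (t - s)) volume := by
      have := hvmeas.comp_quasiMeasurePreserving
        (quasiMeasurePreserving_sub_left_of_right_invariant volume t)
      exact this
    have hC0 : 0 ≤ C := le_trans (abs_nonneg _) (hvM (T/2) hmid)
    have hbd : ∀ x : ℝ, |(Ioo 0 T).indicator v x| ≤ C := by
      intro x
      by_cases h : x ∈ Ioo (0:ℝ) T
      · rw [indicator_of_mem h]; exact hvM x h
      · rw [indicator_of_notMem h]; simpa using hC0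
    have hbase : IntegrableOn (fun s => (Ioo 0 T).indicator v (t - s) * k' s) (Ioc 0 t) volume := by
      refine Integrable.bdd_mul (hk'int.mono_set hIocsub) hvc.restrict (c := C) (Eventually.of_forall fun x => ?_)
      rw [Real.norm_eq_abs]; exact hbd _
    exact hbase.congr_fun (fun s _ => mul_comm _ _) measurableSet_Ioc
  have hint1 := hmkint u M huC huM
  have hint2 := hmkint w2 (M ^ 2) hw2C hw2M
  -- key inequality
  have hkey : 2 * β * I1 + I2 ≤ k0 * β ^ 2 := by
    have hcomb : 2 * β * I1 + I2 = ∫ s in Ioc 0 t,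
        (2 * β * (k' s * (Ioo 0 T).indicator u (t - s))
          + k' s * (Ioo 0 T).indicator w2 (t - s)) := by
      rw [hI1, hI2, ← MeasureTheory.integral_const_mul,
        ← integral_add (hint1.const_mul _) hint2]
    have hmono : ∫ s in Ioc 0 t,
        (2 * β * (k' s * (Ioo 0 T).indicator u (t - s))
          + k' s * (Ioo 0 T).indicator w2 (t - s))
        ≤ ∫ s in Ioc 0 t, (-β ^ 2) * k' s := by
      rw [integral_Ioc_eq_integral_Ioo, integral_Ioc_eq_integral_Ioo]
      refine setIntegral_mono_on
        (IntegrableOn.mono_set ((hint1.const_mul _).add hint2) Ioo_subset_Ioc_self)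
        (IntegrableOn.mono_set ((hk'int.mono_set hIocsub).const_mul _) Ioo_subset_Ioc_self)
        measurableSet_Ioo ?_
      intro s hs
      have hsT : s ∈ Ioo (0:ℝ) T := ⟨hs.1, hs.2.trans ht.2⟩
      have htsT : t - s ∈ Ioo (0:ℝ) T := ⟨by linarith [hs.2], by linarith [ht.2, hs.1]⟩
      have hk's : k' s ≤ 0 := deriv_nonpos_of_antitoneOn hkmono hkderiv hsT
      rw [indicator_of_mem htsT, indicator_of_mem htsT]
      have hconv : -β ^ 2 ≤ 2 * β * u (t - s) + w2 (t - s) := by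
        have := neg_part_convex_ineq (u (t - s)) (u t)
        rw [hw2]; rw [hβ]
        simpa using this
      calc 2 * β * (k' s * u (t - s)) + k' s * w2 (t - s)
          = k' s * (2 * β * u (t - s) + w2 (t - s)) := by ring
      _ ≤ k' s * (-β ^ 2) := mul_le_mul_of_nonpos_left hconv hk's
      _ = (-β ^ 2) * k' s := mul_comm _ _
    have hval : ∫ s in Ioc 0 t, (-β ^ 2) * k' s = (-β ^ 2) * (k t - k0) := by
      rw [MeasureTheory.integral_const_mul]
      congr 1
      have := hkrep t ht
      linarith
    have hkt : 0 ≤ k t := hknn t ⟨ht.1, ht.2.le⟩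
    have hfin : (-β ^ 2) * (k t - k0) ≤ k0 * β ^ 2 := by nlinarith [sq_nonneg β]
    linarith [hcomb ▸ le_trans hmono (hval ▸ hfin)]
  have hexp : β * (k0 * u t + I1) = k0 * (β * u t) + β * I1 := by ring
  rw [hexp, hβu, hw2t]
  linarith [hkey]
end
end
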